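/- In a triangulation of a double chain with n points on each chain and no points in the flip-kernel, flipping an edge between an upper-chain point and a lower-chain point does not change the left-to-right order in which a line separating the two chains crosses the upper-lower edges, except for replacing the flipped edge by an edge occupying the same position in that order. -/

import Mathlib

open scoped Classical

/-- Points of the plane. -/
abbrev Pt := ℝ × ℝ

/-- `S` is in general position: no three points are collinear. -/
def GenPos (S : Finset Pt) : Prop :=
  ∀ a ∈ S, ∀ b ∈ S, ∀ c ∈ S, a ≠ b → a ≠ c → b ≠ c →
    ¬ Collinear ℝ ({a, b, c} : Set Pt)

/-- `e` is an edge of the point set `S` (a segment spanned by two points of `S`). -/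
def SpannedBy (S : Finset Pt) (e : Pt × Pt) : Prop :=
  e.1 ∈ S ∧ e.2 ∈ S ∧ e.1 ≠ e.2

/-- Two segments cross: their relative interiors intersect. -/
def Crosses (e f : Pt × Pt) : Prop :=
  (openSegment ℝ e.1 e.2 ∩ openSegment ℝ f.1 f.2).Nonempty

/-- The convex quadrilateral spanned by the endpoints of `e` and `f` contains no
point of `S` besides those endpoints. -/
def EmptyQuad (S : Finset Pt) (e f : Pt × Pt) : Prop :=
  ∀ p ∈ S, p ∈ convexHull ℝ ({e.1, e.2, f.1, f.2} : Set Pt) →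
    p = e.1 ∨ p = e.2 ∨ p = f.1 ∨ p = f.2

/-- Adjacency in the quadrilateral graph of `S`: two spanned segments that cross and
whose four endpoints form an empty convex quadrilateral. -/
def QAdj (S : Finset Pt) (e f : Pt × Pt) : Prop :=
  SpannedBy S e ∧ SpannedBy S f ∧ Crosses e f ∧ EmptyQuad S e f

/-- `e` and `f` represent the same segment. -/
def SameSeg (e f : Pt × Pt) : Prop :=
  segment ℝ e.1 e.2 = segment ℝ f.1 f.2

/-- `T` is a triangulation of the point set `S`: a maximal non-crossing
straight-line graph on vertex set `S`. -/
def IsTriOf (S : Finset Pt) (T : Finset (Pt × Pt)) : Prop :=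
  (∀ e ∈ T, SpannedBy S e) ∧
  (∀ e ∈ T, ∀ f ∈ T, ¬ SameSeg e f → ¬ Crosses e f) ∧
  (∀ g : Pt × Pt, SpannedBy S g → (∀ e ∈ T, ¬ SameSeg g e) → ∃ e ∈ T, Crosses g e)

/-- A flip in a triangulation of `S`: the edge `e` of `T` is removed and the new
edge `f` is inserted, both before and after being triangulations of `S`. -/
def PFlip (S : Finset Pt) (T T' : Finset (Pt × Pt)) (e f : Pt × Pt) : Prop :=
  IsTriOf S T ∧ IsTriOf S T' ∧ e ∈ T ∧ (∀ g ∈ T, ¬ SameSeg f g) ∧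
  T' = insert f (T.erase e)

/-- Four points are in non-convex position: one lies in the convex hull of the
other three. -/
def NonConvex4 (a b c x : Pt) : Prop :=
  a ∈ convexHull ℝ ({b, c, x} : Set Pt) ∨ b ∈ convexHull ℝ ({a, c, x} : Set Pt) ∨
  c ∈ convexHull ℝ ({a, b, x} : Set Pt) ∨ x ∈ convexHull ℝ ({a, b, c} : Set Pt)

/-- A double chain with `n` points `u 0, …, u (n-1)` on the upper chain and
`n` points `l 0, …, l (n-1)` on the lower chain: all `2n` points are distinct,
every point of one chain sees every point of the other chain (the open segment
between them avoids the convex hulls of both chains), and any quadrilateral formed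
by three points of one chain and one point of the other chain is non-convex. -/
structure DoubleChain (n : ℕ) where
  /-- the upper chain -/
  u : Fin n → Pt
  /-- the lower chain -/
  l : Fin n → Pt
  inj : Function.Injective (Sum.elim u l)
  sees : ∀ i j : Fin n,
    openSegment ℝ (u i) (l j) ∩
      (convexHull ℝ (Set.range u) ∪ convexHull ℝ (Set.range l)) = ∅
  nonconvexU : ∀ i j k : Fin n, ∀ m : Fin n, i ≠ j → i ≠ k → j ≠ k →
    NonConvex4 (u i) (u j) (u k) (l m)
  nonconvexL : ∀ i j k : Fin n, ∀ m : Fin n, i ≠ j → i ≠ k → j ≠ k →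
    NonConvex4 (l i) (l j) (l k) (u m)

/-- The point set of a double chain (no extra points). -/
noncomputable def DoubleChain.pts {n : ℕ} (D : DoubleChain n) : Finset Pt :=
  Finset.univ.image D.u ∪ Finset.univ.image D.l

/-- `e` is an edge between an upper-chain and a lower-chain point. -/
def DoubleChain.IsUL {n : ℕ} (D : DoubleChain n) (e : Pt × Pt) : Prop :=
  ∃ i j : Fin n, SameSeg e (D.u i, D.l j)

/-- The point where the segment `p q` crosses the line `{x | φ x = c}`
(for `φ p ≠ φ q`); it is symmetric in `p` and `q`. -/
noncomputable def crossPt (φ : Pt →ₗ[ℝ] ℝ) (c : ℝ) (p q : Pt) : Pt :=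
  ((φ p - c) / (φ p - φ q)) • q + ((c - φ q) / (φ p - φ q)) • p

/-- The position of the crossing of the segment `e` with the separating line
`{x | φ x = c}`, measured by the coordinate `ψ` along the line. -/
noncomputable def posOf (φ ψ : Pt →ₗ[ℝ] ℝ) (c : ℝ) (e : Pt × Pt) : ℝ :=
  ψ (crossPt φ c e.1 e.2)


section Aux

variable (φ ψ : Pt →ₗ[ℝ] ℝ) (c : ℝ)

lemma crossPt_symm (p q : Pt) : crossPt φ c p q = crossPt φ c q p := by
  unfold crossPt
  rcases eq_or_ne (φ p) (φ q) with h | h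
  · rw [h]; simp
  · have h1 : (φ p - c) / (φ p - φ q) = (c - φ p) / (φ q - φ p) := by
      rw [← neg_sub (φ q) (φ p), ← neg_sub c (φ p), neg_div_neg_eq]
    have h2 : (c - φ q) / (φ p - φ q) = (φ q - c) / (φ q - φ p) := by
      rw [← neg_sub (φ q) (φ p), ← neg_sub (φ q) c, neg_div_neg_eq]
    rw [h1, h2, add_comm]

lemma crossPt_neg (p q : Pt) : crossPt (-φ) (-c) p q = crossPt φ c p q := by
  unfold crossPt
  simp only [LinearMap.neg_apply]
  rw [show (-(φ p) - -c) = -(φ p - c) by ring, show (-(φ p) - -(φ q)) = -(φ p - φ q) by ring,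
    show (-c - -(φ q)) = -(c - φ q) by ring, neg_div_neg_eq, neg_div_neg_eq]

lemma crossPt_phi {p q : Pt} (h : φ p ≠ φ q) : φ (crossPt φ c p q) = c := by
  have hne : φ p - φ q ≠ 0 := sub_ne_zero.mpr h
  unfold crossPt
  simp only [map_add, map_smul, smul_eq_mul]
  field_simp
  ring

lemma crossPt_combo {p q : Pt} (hp : c < φ p) (hq : φ q < c) :
    ∃ a b : ℝ, 0 < a ∧ 0 < b ∧ a + b = 1 ∧ a • p + b • q = crossPt φ c p q := by
  have hpq : 0 < φ p - φ q := by linarith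
  refine ⟨(c - φ q) / (φ p - φ q), (φ p - c) / (φ p - φ q),
    div_pos (by linarith) hpq, div_pos (by linarith) hpq, ?_, add_comm _ _⟩
  field_simp
  ring

lemma crossPt_mem {p q : Pt} (hp : c < φ p) (hq : φ q < c) :
    crossPt φ c p q ∈ openSegment ℝ p q := by
  obtain ⟨a, b, ha, hb, hab, h⟩ := crossPt_combo φ c hp hq
  exact ⟨a, b, ha, hb, hab, h⟩

lemma crossPt_uniq {p q w : Pt} (hp : c < φ p) (hq : φ q < c)
    (hw : w ∈ openSegment ℝ p q) (hwc : φ w = c) : w = crossPt φ c p q := by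
  obtain ⟨a, b, ha, hb, hab, hcomb⟩ := hw
  have hpq : 0 < φ p - φ q := by linarith
  have hφ : a * φ p + b * φ q = c := by
    rw [← hwc, ← hcomb]; simp [map_add, map_smul, smul_eq_mul]
  have hA : a = (c - φ q) / (φ p - φ q) := by
    rw [eq_div_iff (ne_of_gt hpq)]; linear_combination hφ - φ q * hab
  have hB : b = (φ p - c) / (φ p - φ q) := by
    rw [eq_div_iff (ne_of_gt hpq)]; linear_combination φ p * hab - hφ
  unfold crossPt
  rw [← hcomb, hA, hB, add_comm]

lemma combo_coeff_zero {p q : Pt} (hpq : p ≠ q) {r s : ℝ} (hrs : r + s = 1)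
    (h : r • p + s • q = p) : s = 0 := by
  have hr : r = 1 - s := by linarith
  subst hr
  have h2 : s • (q - p) = 0 := by
    have : s • (q - p) = (1 - s) • p + s • q - p := by module
    rw [this, h, sub_self]
  rcases smul_eq_zero.mp h2 with h3 | h3
  · exact h3
  · exact absurd (sub_eq_zero.mp h3) (Ne.symm hpq)

lemma seg_ends {p q P Q : Pt} (h : segment ℝ p q = segment ℝ P Q) (hpq : p ≠ q) :
    (P = p ∧ Q = q) ∨ (P = q ∧ Q = p) := by
  have hP : P ∈ segment ℝ p q := by rw [h]; exact left_mem_segment ℝ P Q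
  have hQ : Q ∈ segment ℝ p q := by rw [h]; exact right_mem_segment ℝ P Q
  have hp : p ∈ segment ℝ P Q := by rw [← h]; exact left_mem_segment ℝ p q
  have hq : q ∈ segment ℝ P Q := by rw [← h]; exact right_mem_segment ℝ p q
  obtain ⟨a1, b1, ha1, hb1, hs1, hP⟩ := hP
  obtain ⟨a2, b2, ha2, hb2, hs2, hQ⟩ := hQ
  obtain ⟨a3, b3, ha3, hb3, hs3, hp⟩ := hp
  obtain ⟨a4, b4, ha4, hb4, hs4, hq⟩ := hq
  -- p = a3•P + b3•Q
  have hp' : (a3*a1 + b3*a2) • p + (a3*b1 + b3*b2) • q = p := by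
    rw [← hP, ← hQ] at hp
    have h0 : (a3*a1 + b3*a2) • p + (a3*b1 + b3*b2) • q
        = a3 • (a1 • p + b1 • q) + b3 • (a2 • p + b2 • q) := by module
    rw [h0]; exact hp
  have hsum1 : (a3*a1 + b3*a2) + (a3*b1 + b3*b2) = 1 := by
    linear_combination a3*hs1 + b3*hs2 + hs3
  have hz1 : a3*b1 + b3*b2 = 0 := combo_coeff_zero hpq hsum1 hp'
  have hz1a : a3*b1 = 0 ∧ b3*b2 = 0 := by
    constructor <;> nlinarith [mul_nonneg ha3 hb1, mul_nonneg hb3 hb2]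
  rcases mul_eq_zero.mp hz1a.1 with h3 | h3
  · -- a3 = 0 : p = Q
    right
    have hb3' : b3 = 1 := by linarith
    have hQp : Q = p := by rw [← hp, h3, hb3']; simp
    refine ⟨?_, hQp⟩
    -- show P = q : q = a4•P + b4•Q = a4•P + b4•p ; P = a1•p + b1•q
    have hq' : (a4*b1) • q + (a4*a1 + b4) • p = q := by
      rw [← hP] at hq
      rw [hQp] at hq
      have h0 : (a4*b1) • q + (a4*a1 + b4) • p
          = a4 • (a1 • p + b1 • q) + b4 • p := by module
      rw [h0]; exact hq
    have hsum2 : (a4*b1) + (a4*a1 + b4) = 1 := by linear_combination a4*hs1 + hs4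
    have hz2 : a4*a1 + b4 = 0 := combo_coeff_zero (Ne.symm hpq) hsum2 hq'
    have hb4' : b4 = 0 := by nlinarith [mul_nonneg ha4 ha1]
    have ha4' : a4 = 1 := by linarith
    have ha1' : a1 = 0 := by nlinarith [mul_nonneg ha4 ha1]
    have hb1' : b1 = 1 := by linarith
    rw [← hP, ha1', hb1']; simp
  · -- b1 = 0 : P = p
    left
    have ha1' : a1 = 1 := by linarith
    have hPp : P = p := by rw [← hP, h3, ha1']; simp
    refine ⟨hPp, ?_⟩
    have hq' : (b4*b2) • q + (a4 + b4*a2) • p = q := by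
      rw [← hQ] at hq
      rw [hPp] at hq
      have h0 : (b4*b2) • q + (a4 + b4*a2) • p
          = a4 • p + b4 • (a2 • p + b2 • q) := by module
      rw [h0]; exact hq
    have hsum2 : (b4*b2) + (a4 + b4*a2) = 1 := by linear_combination b4*hs2 + hs4
    have hz2 : a4 + b4*a2 = 0 := combo_coeff_zero (Ne.symm hpq) hsum2 hq'
    have ha4' : a4 = 0 := by nlinarith [mul_nonneg hb4 ha2]
    have hb4' : b4 = 1 := by linarith
    have ha2' : a2 = 0 := by nlinarith [mul_nonneg hb4 ha2]
    have hb2' : b2 = 1 := by linarith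
    rw [← hQ, ha2', hb2']; simp

/-- signed area style affine functional of the line through `P,Q`, anchored at `z`. -/
def lf (φ ψ : Pt →ₗ[ℝ] ℝ) (P Q z w : Pt) : ℝ :=
  (φ P - φ Q) * (ψ w - ψ z) - (ψ P - ψ Q) * (φ w - φ z)

lemma lf_combo (P Q z : Pt) {a b : ℝ} (x y : Pt) (hab : a + b = 1) :
    lf φ ψ P Q z (a • x + b • y) = a * lf φ ψ P Q z x + b * lf φ ψ P Q z y := by
  have hb : b = 1 - a := by linarith
  subst hb
  simp only [lf, map_add, map_smul, smul_eq_mul]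
  ring

lemma lf_z (P Q z : Pt) : lf φ ψ P Q z z = 0 := by simp [lf]

lemma lf_ends (P Q z : Pt) {a b : ℝ} (h : a • P + b • Q = z) (hab : a + b = 1) :
    lf φ ψ P Q z P = 0 ∧ lf φ ψ P Q z Q = 0 := by
  have hb : b = 1 - a := by linarith
  subst hb
  constructor <;>
  · simp only [lf, ← h, map_add, map_smul, smul_eq_mul]
    ring

end Aux

lemma lin_combo (φ : Pt →ₗ[ℝ] ℝ) (a b : ℝ) (x y : Pt) :
    φ (a • x + b • y) = a * φ x + b * φ y := by
  simp [map_add, map_smul, smul_eq_mul]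

lemma nonpos_of_mul_nonneg_right' {a b : ℝ} (h : 0 ≤ a * b) (hb : b < 0) : a ≤ 0 := by
  nlinarith

lemma nonneg_of_mul_nonneg_right' {a b : ℝ} (h : 0 ≤ a * b) (hb : 0 < b) : 0 ≤ a := by
  nlinarith

lemma convex_gt {t x y c : ℝ} (h0 : 0 ≤ t) (h1 : t ≤ 1) (hx : c < x) (hy : c < y) :
    c < (1-t)*x + t*y := by
  rcases eq_or_lt_of_le h0 with h | h
  · rw [← h]; linarith
  · have k1 := mul_pos h (sub_pos.mpr hy)
    have k2 := mul_nonneg (show (0:ℝ) ≤ 1-t by linarith) (by linarith : (0:ℝ) ≤ x - c)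
    linarith

set_option maxHeartbeats 4000000 in
lemma core_lemma (φ ψ : Pt →ₗ[ℝ] ℝ) (c : ℝ)
    (huniq : ∀ x y : Pt, φ x = φ y → ψ x = ψ y → x = y)
    (HU : Set Pt) (hU : Convex ℝ HU)
    (Pu Pl Qu Ql Ru Rl z : Pt)
    (hPu : Pu ∈ HU) (hQu : Qu ∈ HU) (hRu : Ru ∈ HU)
    (hPuc : c < φ Pu) (hQuc : c < φ Qu) (hRuc : c < φ Ru)
    (hPlc : φ Pl < c) (hQlc : φ Ql < c) (hRlc : φ Rl < c)
    (hee : ∀ w ∈ openSegment ℝ Pu Pl, w ∉ HU)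
    (hff : ∀ w ∈ openSegment ℝ Qu Ql, w ∉ HU)
    (hge : ∀ w ∈ openSegment ℝ Ru Rl, w ∉ openSegment ℝ Pu Pl)
    (hgf : ∀ w ∈ openSegment ℝ Ru Rl, w ∉ openSegment ℝ Qu Ql)
    (hze : z ∈ openSegment ℝ Pu Pl) (hzf : z ∈ openSegment ℝ Qu Ql)
    (hzc : c < φ z)
    (hbet : (ψ (crossPt φ c Pu Pl) < ψ (crossPt φ c Ru Rl) ∧
             ψ (crossPt φ c Ru Rl) < ψ (crossPt φ c Qu Ql)) ∨
            (ψ (crossPt φ c Qu Ql) < ψ (crossPt φ c Ru Rl) ∧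
             ψ (crossPt φ c Ru Rl) < ψ (crossPt φ c Pu Pl))) : False := by
  have hΔP : 0 < φ Pu - φ Pl := by linarith
  have hΔQ : 0 < φ Qu - φ Ql := by linarith
  obtain ⟨ae, be, hae, hbe, haebe, hxe⟩ := crossPt_combo φ c hPuc hPlc
  obtain ⟨af, bf, haf, hbf, hafbf, hxf⟩ := crossPt_combo φ c hQuc hQlc
  obtain ⟨ag, bg, hag, hbg, hagbg, hxg⟩ := crossPt_combo φ c hRuc hRlc
  obtain ⟨az, bz, haz, hbz, hazbz, hz⟩ := hze
  obtain ⟨cz, dz, hcz, hdz, hczdz, hz2⟩ := hzf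
  have hbe' : be = 1 - ae := by linarith
  subst hbe'
  have hbf' : bf = 1 - af := by linarith
  subst hbf'
  have hbg' : bg = 1 - ag := by linarith
  subst hbg'
  have hbz' : bz = 1 - az := by linarith
  subst hbz'
  have hdz' : dz = 1 - cz := by linarith
  subst hdz'
  set xe := crossPt φ c Pu Pl with hxedef
  set xf := crossPt φ c Qu Ql with hxfdef
  set xg := crossPt φ c Ru Rl with hxgdef
  have hφxe : φ xe = c := crossPt_phi φ c (ne_of_gt (hPlc.trans hPuc))
  have hφxf : φ xf = c := crossPt_phi φ c (ne_of_gt (hQlc.trans hQuc))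
  have hφxg : φ xg = c := crossPt_phi φ c (ne_of_gt (hRlc.trans hRuc))
  -- coordinates
  have hφz : az * φ Pu + (1-az) * φ Pl = φ z := by rw [← hz, lin_combo]
  have hψz : az * ψ Pu + (1-az) * ψ Pl = ψ z := by rw [← hz, lin_combo]
  have hφz2 : cz * φ Qu + (1-cz) * φ Ql = φ z := by rw [← hz2, lin_combo]
  have hψz2 : cz * ψ Qu + (1-cz) * ψ Ql = ψ z := by rw [← hz2, lin_combo]
  have hφxe' : ae * φ Pu + (1-ae) * φ Pl = c := by rw [← hφxe, ← hxe, lin_combo]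
  have hψxe' : ae * ψ Pu + (1-ae) * ψ Pl = ψ xe := by rw [← hxe, lin_combo]
  have hφxf' : af * φ Qu + (1-af) * φ Ql = c := by rw [← hφxf, ← hxf, lin_combo]
  have hψxf' : af * ψ Qu + (1-af) * ψ Ql = ψ xf := by rw [← hxf, lin_combo]
  have hφzPu : φ z < φ Pu := by
    have h := mul_pos hbz hΔP
    linarith [h, hφz]
  have hφzQu : φ z < φ Qu := by
    have h := mul_pos hdz hΔQ
    linarith [h, hφz2]
  have hcz0 : c - φ z ≠ 0 := sub_ne_zero.mpr (ne_of_lt hzc)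
  -- A := lf φ ψ Pu Pl z ; B := lf φ ψ Qu Ql z
  have hAPu : lf φ ψ Pu Pl z Pu = 0 := (lf_ends φ ψ Pu Pl z hz hazbz).1
  have hAPl : lf φ ψ Pu Pl z Pl = 0 := (lf_ends φ ψ Pu Pl z hz hazbz).2
  have hBQu : lf φ ψ Qu Ql z Qu = 0 := (lf_ends φ ψ Qu Ql z hz2 hczdz).1
  have hBQl : lf φ ψ Qu Ql z Ql = 0 := (lf_ends φ ψ Qu Ql z hz2 hczdz).2
  have hAxe : lf φ ψ Pu Pl z xe = 0 := by
    rw [← hxe, lf_combo φ ψ Pu Pl z Pu Pl haebe, hAPu, hAPl]; ring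
  have hBxf : lf φ ψ Qu Ql z xf = 0 := by
    rw [← hxf, lf_combo φ ψ Qu Ql z Qu Ql hafbf, hBQu, hBQl]; ring
  set NA := lf φ ψ Pu Pl z xf with hNAdef
  set NB := lf φ ψ Qu Ql z xe with hNBdef
  have hNAv : NA = (φ Pu - φ Pl) * (ψ xf - ψ xe) := by
    have h1 : lf φ ψ Pu Pl z xf - lf φ ψ Pu Pl z xe
        = (φ Pu - φ Pl) * (ψ xf - ψ xe) := by
      simp only [lf]; rw [hφxe, hφxf]; ring
    rw [hNAdef]; linarith [hAxe]
  have hNBv : NB = (φ Qu - φ Ql) * (ψ xe - ψ xf) := by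
    have h1 : lf φ ψ Qu Ql z xe - lf φ ψ Qu Ql z xf
        = (φ Qu - φ Ql) * (ψ xe - ψ xf) := by
      simp only [lf]; rw [hφxe, hφxf]; ring
    rw [hNBdef]; linarith [hBxf]
  have hAxg : lf φ ψ Pu Pl z xg = (φ Pu - φ Pl) * (ψ xg - ψ xe) := by
    have h1 : lf φ ψ Pu Pl z xg - lf φ ψ Pu Pl z xe
        = (φ Pu - φ Pl) * (ψ xg - ψ xe) := by
      simp only [lf]; rw [hφxe, hφxg]; ring
    linarith [hAxe]
  have hBxg : lf φ ψ Qu Ql z xg = (φ Qu - φ Ql) * (ψ xg - ψ xf) := by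
    have h1 : lf φ ψ Qu Ql z xg - lf φ ψ Qu Ql z xf
        = (φ Qu - φ Ql) * (ψ xg - ψ xf) := by
      simp only [lf]; rw [hφxf, hφxg]; ring
    linarith [hBxf]
  have hpef : ψ xe ≠ ψ xf := by
    rcases hbet with ⟨h1, h2⟩ | ⟨h1, h2⟩
    · exact ne_of_lt (h1.trans h2)
    · exact ne_of_gt (h1.trans h2)
  have hNAne : NA ≠ 0 := by
    rw [hNAv]; exact mul_ne_zero (ne_of_gt hΔP) (sub_ne_zero.mpr (Ne.symm hpef))
  have hNBne : NB ≠ 0 := by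
    rw [hNBv]; exact mul_ne_zero (ne_of_gt hΔQ) (sub_ne_zero.mpr hpef)
  have hsa : 0 < lf φ ψ Pu Pl z xg * NA := by
    rw [hAxg, hNAv]
    rcases hbet with ⟨h1, h2⟩ | ⟨h1, h2⟩
    · exact mul_pos (mul_pos hΔP (sub_pos.mpr h1)) (mul_pos hΔP (sub_pos.mpr (h1.trans h2)))
    · exact mul_pos_of_neg_of_neg (mul_neg_of_pos_of_neg hΔP (sub_neg.mpr h2))
        (mul_neg_of_pos_of_neg hΔP (sub_neg.mpr (h1.trans h2)))
  have hsb : 0 < lf φ ψ Qu Ql z xg * NB := by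
    rw [hBxg, hNBv]
    rcases hbet with ⟨h1, h2⟩ | ⟨h1, h2⟩
    · exact mul_pos_of_neg_of_neg (mul_neg_of_pos_of_neg hΔQ (sub_neg.mpr h2))
        (mul_neg_of_pos_of_neg hΔQ (sub_neg.mpr (h1.trans h2)))
    · exact mul_pos (mul_pos hΔQ (sub_pos.mpr h1)) (mul_pos hΔQ (sub_pos.mpr (h1.trans h2)))
  -- main algebraic identities
  have hAw : ∀ w : Pt, (c - φ z) * lf φ ψ Pu Pl z w
      = (φ Pu - φ Pl) * (-((ψ xe - ψ z) * (φ w - φ z)) + (c - φ z) * (ψ w - ψ z)) := by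
    intro w
    have h := hAxe
    simp only [lf] at h ⊢
    rw [hφxe] at h
    linear_combination (φ w - φ z) * h
  have hBw : ∀ w : Pt, (c - φ z) * lf φ ψ Qu Ql z w
      = (φ Qu - φ Ql) * (-((ψ xf - ψ z) * (φ w - φ z)) + (c - φ z) * (ψ w - ψ z)) := by
    intro w
    have h := hBxf
    simp only [lf] at h ⊢
    rw [hφxf] at h
    linear_combination (φ w - φ z) * h
  have hsum : ∀ w : Pt,
      (lf φ ψ Qu Ql z w * NA + lf φ ψ Pu Pl z w * NB) * (φ z - c)
        = (φ z - φ w) * (NA * NB) := by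
    intro w
    rw [hNAv, hNBv]
    linear_combination (-((φ Pu - φ Pl) * (ψ xf - ψ xe))) * hBw w
      + ((φ Qu - φ Ql) * (ψ xf - ψ xe)) * hAw w
  have hpsi2 : ∀ w : Pt,
      lf φ ψ Qu Ql z w * (ψ xe - ψ z) * NA + lf φ ψ Pu Pl z w * (ψ xf - ψ z) * NB
        = (ψ w - ψ z) * (NA * NB) := by
    intro w
    apply mul_left_cancel₀ hcz0
    rw [hNAv, hNBv]
    linear_combination ((ψ xe - ψ z) * (φ Pu - φ Pl) * (ψ xf - ψ xe)) * hBw w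
      + (-((ψ xf - ψ z) * (φ Qu - φ Ql) * (ψ xf - ψ xe))) * hAw w
  -- phi bound from barycentric positivity
  have hvb : ∀ w : Pt, 0 ≤ lf φ ψ Pu Pl z w * NA → 0 ≤ lf φ ψ Qu Ql z w * NB →
      φ w ≤ φ z := by
    intro w h1 h2
    have hs := hsum w
    have hs2 : ((lf φ ψ Qu Ql z w * NB) * NA^2 + (lf φ ψ Pu Pl z w * NA) * NB^2) * (φ z - c)
        = (φ z - φ w) * (NA*NB)^2 := by linear_combination (NA*NB) * hs
    have h3 : 0 < (NA*NB)^2 :=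
      lt_of_le_of_ne (sq_nonneg _) (Ne.symm (pow_ne_zero 2 (mul_ne_zero hNAne hNBne)))
    by_contra hcon
    push_neg at hcon
    have hL : 0 ≤ ((lf φ ψ Qu Ql z w * NB) * NA^2 + (lf φ ψ Pu Pl z w * NA) * NB^2) * (φ z - c) :=
      mul_nonneg (add_nonneg (mul_nonneg h2 (sq_nonneg NA))
        (mul_nonneg h1 (sq_nonneg NB))) (by linarith)
    have hR : (φ z - φ w) * (NA*NB)^2 < 0 :=
      mul_neg_of_neg_of_pos (by linarith) h3
    linarith [hs2, hL, hR]
  -- membership lemmas (barycentric form)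
  have lineE_memB : ∀ w : Pt, lf φ ψ Pu Pl z w = 0 → 0 ≤ lf φ ψ Qu Ql z w * NB →
      c < φ w → w ∈ openSegment ℝ Pu Pl := by
    intro w hA0 hB0 hcw
    have hkey : lf φ ψ Qu Ql z w * (φ z - c) = (φ z - φ w) * NB := by
      apply mul_left_cancel₀ hNAne
      have hs := hsum w
      rw [hA0] at hs
      linear_combination hs
    have hkeyp : lf φ ψ Qu Ql z w * (ψ xe - ψ z) = (ψ w - ψ z) * NB := by
      apply mul_left_cancel₀ hNAne
      have hs := hpsi2 w
      rw [hA0] at hs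
      linear_combination hs
    set p := lf φ ψ Qu Ql z w / NB with hpdef
    have hps : p * (φ z - c) = φ z - φ w := by
      rw [hpdef, div_mul_eq_mul_div, hkey, mul_div_assoc, div_self hNBne, mul_one]
    have hpψ : p * (ψ xe - ψ z) = ψ w - ψ z := by
      rw [hpdef, div_mul_eq_mul_div, hkeyp, mul_div_assoc, div_self hNBne, mul_one]
    have hp0 : 0 ≤ p := by
      rw [hpdef]
      rcases lt_or_gt_of_ne hNBne with h | h
      · exact div_nonneg_iff.mpr (Or.inr ⟨nonpos_of_mul_nonneg_right' hB0 h, le_of_lt h⟩)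
      · exact div_nonneg_iff.mpr (Or.inl ⟨nonneg_of_mul_nonneg_right' hB0 h, le_of_lt h⟩)
    have hp1 : p < 1 := by
      by_contra hcon
      push_neg at hcon
      have := mul_le_mul_of_nonneg_right hcon (show (0:ℝ) ≤ φ z - c by linarith)
      linarith [hps]
    refine ⟨(1-p)*az + p*ae, (1-p)*(1-az) + p*(1-ae), ?_, ?_, by ring, ?_⟩
    · linarith [mul_pos (show (0:ℝ) < 1-p by linarith) haz, mul_nonneg hp0 hae.le]
    · linarith [mul_pos (show (0:ℝ) < 1-p by linarith) hbz, mul_nonneg hp0 hbe.le]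
    · apply huniq
      · rw [lin_combo]
        linear_combination (1-p)*hφz + p*hφxe' - hps
      · rw [lin_combo]
        linear_combination (1-p)*hψz + p*hψxe' + hpψ
  have lineF_memB : ∀ w : Pt, lf φ ψ Qu Ql z w = 0 → 0 ≤ lf φ ψ Pu Pl z w * NA →
      c < φ w → w ∈ openSegment ℝ Qu Ql := by
    intro w hB0 hA0 hcw
    have hkey : lf φ ψ Pu Pl z w * (φ z - c) = (φ z - φ w) * NA := by
      apply mul_left_cancel₀ hNBne
      have hs := hsum w
      rw [hB0] at hs
      linear_combination hs
    have hkeyp : lf φ ψ Pu Pl z w * (ψ xf - ψ z) = (ψ w - ψ z) * NA := by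
      apply mul_left_cancel₀ hNBne
      have hs := hpsi2 w
      rw [hB0] at hs
      linear_combination hs
    set p := lf φ ψ Pu Pl z w / NA with hpdef
    have hps : p * (φ z - c) = φ z - φ w := by
      rw [hpdef, div_mul_eq_mul_div, hkey, mul_div_assoc, div_self hNAne, mul_one]
    have hpψ : p * (ψ xf - ψ z) = ψ w - ψ z := by
      rw [hpdef, div_mul_eq_mul_div, hkeyp, mul_div_assoc, div_self hNAne, mul_one]
    have hp0 : 0 ≤ p := by
      rw [hpdef]
      rcases lt_or_gt_of_ne hNAne with h | h
      · exact div_nonneg_iff.mpr (Or.inr ⟨nonpos_of_mul_nonneg_right' hA0 h, le_of_lt h⟩)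
      · exact div_nonneg_iff.mpr (Or.inl ⟨nonneg_of_mul_nonneg_right' hA0 h, le_of_lt h⟩)
    have hp1 : p < 1 := by
      by_contra hcon
      push_neg at hcon
      have := mul_le_mul_of_nonneg_right hcon (show (0:ℝ) ≤ φ z - c by linarith)
      linarith [hps]
    refine ⟨(1-p)*cz + p*af, (1-p)*(1-cz) + p*(1-af), ?_, ?_, by ring, ?_⟩
    · linarith [mul_pos (show (0:ℝ) < 1-p by linarith) hcz, mul_nonneg hp0 haf.le]
    · linarith [mul_pos (show (0:ℝ) < 1-p by linarith) hdz, mul_nonneg hp0 hbf.le]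
    · apply huniq
      · rw [lin_combo]
        linear_combination (1-p)*hφz2 + p*hφxf' - hps
      · rw [lin_combo]
        linear_combination (1-p)*hψz2 + p*hψxf' + hpψ
  -- membership lemmas (phi window form)
  have lineE_memV : ∀ w : Pt, lf φ ψ Pu Pl z w = 0 → c < φ w → φ w < φ Pu →
      w ∈ openSegment ℝ Pu Pl := by
    intro w hA0 h1 h2
    refine ⟨(φ w - φ Pl)/(φ Pu - φ Pl), (φ Pu - φ w)/(φ Pu - φ Pl),
      div_pos (by linarith) hΔP, div_pos (by linarith) hΔP, by field_simp; ring, ?_⟩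
    apply huniq
    · rw [lin_combo]; field_simp; ring
    · rw [lin_combo]
      rw [div_mul_eq_mul_div, div_mul_eq_mul_div, ← add_div,
        div_eq_iff (ne_of_gt hΔP)]
      simp only [lf] at hA0
      linear_combination (-1) * hA0 + (φ Pu - φ Pl) * hψz - (ψ Pu - ψ Pl) * hφz
  have lineF_memV : ∀ w : Pt, lf φ ψ Qu Ql z w = 0 → c < φ w → φ w < φ Qu →
      w ∈ openSegment ℝ Qu Ql := by
    intro w hB0 h1 h2
    refine ⟨(φ w - φ Ql)/(φ Qu - φ Ql), (φ Qu - φ w)/(φ Qu - φ Ql),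
      div_pos (by linarith) hΔQ, div_pos (by linarith) hΔQ, by field_simp; ring, ?_⟩
    apply huniq
    · rw [lin_combo]; field_simp; ring
    · rw [lin_combo]
      rw [div_mul_eq_mul_div, div_mul_eq_mul_div, ← add_div,
        div_eq_iff (ne_of_gt hΔQ)]
      simp only [lf] at hB0
      linear_combination (-1) * hB0 + (φ Qu - φ Ql) * hψz2 - (ψ Qu - ψ Ql) * hφz2
  -- sign of B at Pu and A at Qu
  have hBPuNB : lf φ ψ Qu Ql z Pu * NB < 0 := by
    have h1 : az * lf φ ψ Qu Ql z Pu + (1-az) * lf φ ψ Qu Ql z Pl = 0 := by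
      rw [← lf_combo φ ψ Qu Ql z Pu Pl hazbz, hz]
      exact lf_z φ ψ Qu Ql z
    have h2 : ae * lf φ ψ Qu Ql z Pu + (1-ae) * lf φ ψ Qu Ql z Pl = NB := by
      rw [← lf_combo φ ψ Qu Ql z Pu Pl haebe, hxe, hNBdef]
    have hkeyB : (c - φ z) * lf φ ψ Qu Ql z Pu = (φ Pu - φ Pl) * (1-az) * NB := by
      linear_combination (lf φ ψ Qu Ql z Pu) * hφz - (lf φ ψ Qu Ql z Pu) * hφxe'
        + (φ Pu - φ Pl)*(1-az)*h2 - (φ Pu - φ Pl)*(1-ae)*h1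
    have h2' : (c - φ z) * (lf φ ψ Qu Ql z Pu * NB)
        = (φ Pu - φ Pl) * (1-az) * (NB*NB) := by linear_combination NB * hkeyB
    by_contra hcon
    push_neg at hcon
    have hpos : 0 < (φ Pu - φ Pl) * (1-az) * (NB*NB) :=
      mul_pos (mul_pos hΔP hbz) (mul_self_pos.mpr hNBne)
    have hnn : 0 ≤ (φ z - c) * (lf φ ψ Qu Ql z Pu * NB) :=
      mul_nonneg (by linarith) hcon
    linarith [hpos, hnn, h2']
  have hAQuNA : lf φ ψ Pu Pl z Qu * NA < 0 := by
    have h1 : cz * lf φ ψ Pu Pl z Qu + (1-cz) * lf φ ψ Pu Pl z Ql = 0 := by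
      rw [← lf_combo φ ψ Pu Pl z Qu Ql hczdz, hz2]
      exact lf_z φ ψ Pu Pl z
    have h2 : af * lf φ ψ Pu Pl z Qu + (1-af) * lf φ ψ Pu Pl z Ql = NA := by
      rw [← lf_combo φ ψ Pu Pl z Qu Ql hafbf, hxf, hNAdef]
    have hkeyA : (c - φ z) * lf φ ψ Pu Pl z Qu = (φ Qu - φ Ql) * (1-cz) * NA := by
      linear_combination (lf φ ψ Pu Pl z Qu) * hφz2 - (lf φ ψ Pu Pl z Qu) * hφxf'
        + (φ Qu - φ Ql)*(1-cz)*h2 - (φ Qu - φ Ql)*(1-af)*h1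
    have h2' : (c - φ z) * (lf φ ψ Pu Pl z Qu * NA)
        = (φ Qu - φ Ql) * (1-cz) * (NA*NA) := by linear_combination NA * hkeyA
    by_contra hcon
    push_neg at hcon
    have hpos : 0 < (φ Qu - φ Ql) * (1-cz) * (NA*NA) :=
      mul_pos (mul_pos hΔQ hdz) (mul_self_pos.mpr hNAne)
    have hnn : 0 ≤ (φ z - c) * (lf φ ψ Pu Pl z Qu * NA) :=
      mul_nonneg (by linarith) hcon
    linarith [hpos, hnn, h2']
  -- escape machinery for Case 2
  have hxgmem : ∀ t : ℝ, 0 < t → t < 1 → ((1-t) • xg + t • Ru) ∈ openSegment ℝ Ru Rl := by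
    intro t h0 h1
    refine ⟨(1-t)*ag + t, (1-t)*(1-ag),
      by linarith [mul_nonneg (show (0:ℝ) ≤ 1-t by linarith) hag.le],
      mul_pos (by linarith) hbg, by ring, ?_⟩
    rw [← hxg]; module
  have hφxgt : ∀ t : ℝ, φ ((1-t) • xg + t • Ru) = (1-t)*c + t*φ Ru := by
    intro t; rw [lin_combo, hφxg]
  have hAt : ∀ t : ℝ, lf φ ψ Pu Pl z ((1-t) • xg + t • Ru)
      = (1-t) * lf φ ψ Pu Pl z xg + t * lf φ ψ Pu Pl z Ru :=
    fun t => lf_combo φ ψ Pu Pl z xg Ru (by ring)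
  have hBt : ∀ t : ℝ, lf φ ψ Qu Ql z ((1-t) • xg + t • Ru)
      = (1-t) * lf φ ψ Qu Ql z xg + t * lf φ ψ Qu Ql z Ru :=
    fun t => lf_combo φ ψ Qu Ql z xg Ru (by ring)
  have case2L : ∀ t : ℝ, 0 < t → t < 1 →
      lf φ ψ Pu Pl z ((1-t) • xg + t • Ru) = 0 →
      0 ≤ lf φ ψ Qu Ql z ((1-t) • xg + t • Ru) * NB → False := by
    intro t h0 h1 hA0 hB0
    have hφc : c < φ ((1-t) • xg + t • Ru) := by
      rw [hφxgt]
      have := mul_pos h0 (sub_pos.mpr hRuc)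
      linarith
    exact hge _ (hxgmem t h0 h1) (lineE_memB _ hA0 hB0 hφc)
  have case2R : ∀ t : ℝ, 0 < t → t < 1 →
      lf φ ψ Qu Ql z ((1-t) • xg + t • Ru) = 0 →
      0 ≤ lf φ ψ Pu Pl z ((1-t) • xg + t • Ru) * NA → False := by
    intro t h0 h1 hB0 hA0
    have hφc : c < φ ((1-t) • xg + t • Ru) := by
      rw [hφxgt]
      have := mul_pos h0 (sub_pos.mpr hRuc)
      linarith
    exact hgf _ (hxgmem t h0 h1) (lineF_memB _ hB0 hA0 hφc)
  by_cases hARu : 0 ≤ lf φ ψ Pu Pl z Ru * NA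
  · by_cases hBRu : 0 ≤ lf φ ψ Qu Ql z Ru * NB
    · -- CASE 1
      rcases eq_or_lt_of_le hARu with hA0 | hApos
      · have hA0' : lf φ ψ Pu Pl z Ru = 0 :=
          (mul_eq_zero.mp hA0.symm).resolve_right hNAne
        exact hee Ru (lineE_memB Ru hA0' hBRu hRuc) hRu
      rcases eq_or_lt_of_le hBRu with hB0 | hBpos
      · have hB0' : lf φ ψ Qu Ql z Ru = 0 :=
          (mul_eq_zero.mp hB0.symm).resolve_right hNBne
        exact hff Ru (lineF_memB Ru hB0' hARu hRuc) hRu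
      have hφRuz : φ Ru ≤ φ z := hvb Ru hARu hBRu
      -- towards Pu
      have hQP : φ Qu < φ Pu := by
        obtain ⟨t0, ht0def⟩ : ∃ x : ℝ, x = (lf φ ψ Qu Ql z Ru * NB) /
            ((lf φ ψ Qu Ql z Ru * NB) - (lf φ ψ Qu Ql z Pu * NB)) := ⟨_, rfl⟩
        have hden : 0 < (lf φ ψ Qu Ql z Ru * NB) - (lf φ ψ Qu Ql z Pu * NB) := by
          linarith
        have ht00 : 0 < t0 := by rw [ht0def]; exact div_pos hBpos hden
        have ht01 : t0 < 1 := by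
          rw [ht0def, div_lt_one hden]; linarith
        have hmul : t0 * ((lf φ ψ Qu Ql z Ru * NB) - (lf φ ψ Qu Ql z Pu * NB))
            = lf φ ψ Qu Ql z Ru * NB := by
          rw [ht0def]; exact div_mul_cancel₀ _ (ne_of_gt hden)
        have hwBv : lf φ ψ Qu Ql z ((1 - t0) • Ru + t0 • Pu)
            = (1-t0) * lf φ ψ Qu Ql z Ru + t0 * lf φ ψ Qu Ql z Pu :=
          lf_combo φ ψ Qu Ql z Ru Pu (by ring)
        have hwB : lf φ ψ Qu Ql z ((1 - t0) • Ru + t0 • Pu) = 0 := by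
          have hh : lf φ ψ Qu Ql z ((1 - t0) • Ru + t0 • Pu) * NB = 0 := by
            rw [hwBv]; linear_combination -hmul
          exact (mul_eq_zero.mp hh).resolve_right hNBne
        have hwHU : ((1 - t0) • Ru + t0 • Pu) ∈ HU := hU.segment_subset hRu hPu
          (openSegment_subset_segment ℝ Ru Pu ⟨1-t0, t0, by linarith, ht00, by ring, rfl⟩)
        have hφw : φ ((1 - t0) • Ru + t0 • Pu) = (1-t0)*φ Ru + t0*φ Pu := lin_combo φ _ _ _ _
        have hφwc : c < φ ((1 - t0) • Ru + t0 • Pu) := by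
          rw [hφw]; exact convex_gt ht00.le ht01.le hRuc hPuc
        by_cases hwin : φ ((1 - t0) • Ru + t0 • Pu) < φ Qu
        · exact absurd hwHU (hff _ (lineF_memV _ hwB hφwc hwin))
        · push_neg at hwin
          have hRuw : φ Ru < φ ((1 - t0) • Ru + t0 • Pu) := by linarith
          have hPuRu : φ Ru < φ Pu := by
            by_contra hcc
            push_neg at hcc
            have := mul_nonneg (le_of_lt ht00) (sub_nonneg.mpr hcc)
            linarith [this, hφw]
          have hwPu : φ ((1 - t0) • Ru + t0 • Pu) < φ Pu := by
            have := mul_pos (show (0:ℝ) < 1 - t0 by linarith) (sub_pos.mpr hPuRu)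
            linarith [this, hφw]
          linarith
      -- towards Qu
      have hPQ : φ Pu < φ Qu := by
        obtain ⟨t1, ht1def⟩ : ∃ x : ℝ, x = (lf φ ψ Pu Pl z Ru * NA) /
            ((lf φ ψ Pu Pl z Ru * NA) - (lf φ ψ Pu Pl z Qu * NA)) := ⟨_, rfl⟩
        have hden : 0 < (lf φ ψ Pu Pl z Ru * NA) - (lf φ ψ Pu Pl z Qu * NA) := by
          linarith
        have ht10 : 0 < t1 := by rw [ht1def]; exact div_pos hApos hden
        have ht11 : t1 < 1 := by
          rw [ht1def, div_lt_one hden]; linarith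
        have hmul : t1 * ((lf φ ψ Pu Pl z Ru * NA) - (lf φ ψ Pu Pl z Qu * NA))
            = lf φ ψ Pu Pl z Ru * NA := by
          rw [ht1def]; exact div_mul_cancel₀ _ (ne_of_gt hden)
        have hwAv : lf φ ψ Pu Pl z ((1 - t1) • Ru + t1 • Qu)
            = (1-t1) * lf φ ψ Pu Pl z Ru + t1 * lf φ ψ Pu Pl z Qu :=
          lf_combo φ ψ Pu Pl z Ru Qu (by ring)
        have hwA : lf φ ψ Pu Pl z ((1 - t1) • Ru + t1 • Qu) = 0 := by
          have hh : lf φ ψ Pu Pl z ((1 - t1) • Ru + t1 • Qu) * NA = 0 := by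
            rw [hwAv]; linear_combination -hmul
          exact (mul_eq_zero.mp hh).resolve_right hNAne
        have hwHU : ((1 - t1) • Ru + t1 • Qu) ∈ HU := hU.segment_subset hRu hQu
          (openSegment_subset_segment ℝ Ru Qu ⟨1-t1, t1, by linarith, ht10, by ring, rfl⟩)
        have hφw : φ ((1 - t1) • Ru + t1 • Qu) = (1-t1)*φ Ru + t1*φ Qu := lin_combo φ _ _ _ _
        have hφwc : c < φ ((1 - t1) • Ru + t1 • Qu) := by
          rw [hφw]; exact convex_gt ht10.le ht11.le hRuc hQuc
        by_cases hwin : φ ((1 - t1) • Ru + t1 • Qu) < φ Pu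
        · exact absurd hwHU (hee _ (lineE_memV _ hwA hφwc hwin))
        · push_neg at hwin
          have hRuw : φ Ru < φ ((1 - t1) • Ru + t1 • Qu) := by linarith
          have hQuRu : φ Ru < φ Qu := by
            by_contra hcc
            push_neg at hcc
            have := mul_nonneg (le_of_lt ht10) (sub_nonneg.mpr hcc)
            linarith [this, hφw]
          have hwQu : φ ((1 - t1) • Ru + t1 • Qu) < φ Qu := by
            have := mul_pos (show (0:ℝ) < 1 - t1 by linarith) (sub_pos.mpr hQuRu)
            linarith [this, hφw]
          linarith
      linarith
    · -- CASE 2 : B Ru negative, A Ru nonneg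
      push_neg at hBRu
      obtain ⟨t, htdef⟩ : ∃ x : ℝ, x = (lf φ ψ Qu Ql z xg * NB) /
          ((lf φ ψ Qu Ql z xg * NB) - (lf φ ψ Qu Ql z Ru * NB)) := ⟨_, rfl⟩
      have hden : 0 < (lf φ ψ Qu Ql z xg * NB) - (lf φ ψ Qu Ql z Ru * NB) := by linarith
      have ht0 : 0 < t := by rw [htdef]; exact div_pos hsb hden
      have ht1 : t < 1 := by rw [htdef, div_lt_one hden]; linarith
      have hmul : t * ((lf φ ψ Qu Ql z xg * NB) - (lf φ ψ Qu Ql z Ru * NB))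
          = lf φ ψ Qu Ql z xg * NB := by
        rw [htdef]; exact div_mul_cancel₀ _ (ne_of_gt hden)
      have hB0 : lf φ ψ Qu Ql z ((1-t) • xg + t • Ru) = 0 := by
        have hh : lf φ ψ Qu Ql z ((1-t) • xg + t • Ru) * NB = 0 := by
          rw [hBt]; linear_combination -hmul
        exact (mul_eq_zero.mp hh).resolve_right hNBne
      have hA0 : 0 ≤ lf φ ψ Pu Pl z ((1-t) • xg + t • Ru) * NA := by
        rw [hAt]
        have k1 := mul_nonneg (show (0:ℝ) ≤ 1-t by linarith) hsa.le
        have k2 := mul_nonneg ht0.le hARu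
        linarith [k1, k2]
      exact case2R t ht0 ht1 hB0 hA0
  · -- CASE 2 : A Ru negative
    push_neg at hARu
    obtain ⟨ta, htadef⟩ : ∃ x : ℝ, x = (lf φ ψ Pu Pl z xg * NA) /
        ((lf φ ψ Pu Pl z xg * NA) - (lf φ ψ Pu Pl z Ru * NA)) := ⟨_, rfl⟩
    have hdena : 0 < (lf φ ψ Pu Pl z xg * NA) - (lf φ ψ Pu Pl z Ru * NA) := by linarith
    have hta0 : 0 < ta := by rw [htadef]; exact div_pos hsa hdena
    have hta1 : ta < 1 := by rw [htadef, div_lt_one hdena]; linarith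
    have hmula : ta * ((lf φ ψ Pu Pl z xg * NA) - (lf φ ψ Pu Pl z Ru * NA))
        = lf φ ψ Pu Pl z xg * NA := by
      rw [htadef]; exact div_mul_cancel₀ _ (ne_of_gt hdena)
    have hA0a : lf φ ψ Pu Pl z ((1-ta) • xg + ta • Ru) = 0 := by
      have hh : lf φ ψ Pu Pl z ((1-ta) • xg + ta • Ru) * NA = 0 := by
        rw [hAt]; linear_combination -hmula
      exact (mul_eq_zero.mp hh).resolve_right hNAne
    by_cases hBRu : 0 ≤ lf φ ψ Qu Ql z Ru * NB
    · have hB0a : 0 ≤ lf φ ψ Qu Ql z ((1-ta) • xg + ta • Ru) * NB := by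
        rw [hBt]
        have k1 := mul_nonneg (show (0:ℝ) ≤ 1-ta by linarith) hsb.le
        have k2 := mul_nonneg hta0.le hBRu
        linarith [k1, k2]
      exact case2L ta hta0 hta1 hA0a hB0a
    · push_neg at hBRu
      obtain ⟨tb, htbdef⟩ : ∃ x : ℝ, x = (lf φ ψ Qu Ql z xg * NB) /
          ((lf φ ψ Qu Ql z xg * NB) - (lf φ ψ Qu Ql z Ru * NB)) := ⟨_, rfl⟩
      have hdenb : 0 < (lf φ ψ Qu Ql z xg * NB) - (lf φ ψ Qu Ql z Ru * NB) := by linarith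
      have htb0 : 0 < tb := by rw [htbdef]; exact div_pos hsb hdenb
      have htb1 : tb < 1 := by rw [htbdef, div_lt_one hdenb]; linarith
      have hmulb : tb * ((lf φ ψ Qu Ql z xg * NB) - (lf φ ψ Qu Ql z Ru * NB))
          = lf φ ψ Qu Ql z xg * NB := by
        rw [htbdef]; exact div_mul_cancel₀ _ (ne_of_gt hdenb)
      have hB0b : lf φ ψ Qu Ql z ((1-tb) • xg + tb • Ru) = 0 := by
        have hh : lf φ ψ Qu Ql z ((1-tb) • xg + tb • Ru) * NB = 0 := by
          rw [hBt]; linear_combination -hmulb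
        exact (mul_eq_zero.mp hh).resolve_right hNBne
      rcases le_or_gt ta tb with hcmp | hcmp
      · have hB0a : 0 ≤ lf φ ψ Qu Ql z ((1-ta) • xg + ta • Ru) * NB := by
          rw [hBt]
          have h1 : ta * ((lf φ ψ Qu Ql z xg * NB) - (lf φ ψ Qu Ql z Ru * NB))
              ≤ tb * ((lf φ ψ Qu Ql z xg * NB) - (lf φ ψ Qu Ql z Ru * NB)) :=
            mul_le_mul_of_nonneg_right hcmp (le_of_lt hdenb)
          linarith [h1, hmulb]
        exact case2L ta hta0 hta1 hA0a hB0a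
      · have hA0b : 0 ≤ lf φ ψ Pu Pl z ((1-tb) • xg + tb • Ru) * NA := by
          rw [hAt]
          have h1 : tb * ((lf φ ψ Pu Pl z xg * NA) - (lf φ ψ Pu Pl z Ru * NA))
              ≤ ta * ((lf φ ψ Pu Pl z xg * NA) - (lf φ ψ Pu Pl z Ru * NA)) :=
            mul_le_mul_of_nonneg_right (le_of_lt hcmp) (le_of_lt hdena)
          linarith [h1, hmula]
        exact case2R tb htb0 htb1 hB0b hA0b

lemma normSeg {p q P Q : Pt} (h : segment ℝ p q = segment ℝ P Q) (hne : p ≠ q) :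
    openSegment ℝ p q = openSegment ℝ P Q ∧
      ∀ (φ : Pt →ₗ[ℝ] ℝ) (c : ℝ), crossPt φ c p q = crossPt φ c P Q := by
  rcases seg_ends h hne with ⟨h1, h2⟩ | ⟨h1, h2⟩
  · subst h1; subst h2; exact ⟨rfl, fun _ _ => rfl⟩
  · subst h1; subst h2
    exact ⟨openSegment_symm ℝ _ _, fun φ c => crossPt_symm φ c _ _⟩

set_option maxHeartbeats 1000000 in
theorem double_chain_flip_preserves_crossing_order
    (n : ℕ) (D : DoubleChain n)
    (φ ψ : Pt →ₗ[ℝ] ℝ) (c : ℝ)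
    (hsep : (∀ i, c < φ (D.u i)) ∧ ∀ j, φ (D.l j) < c)
    (hψ : ∀ x y : Pt, φ x = φ y → ψ x = ψ y → x = y)
    (T T' : Finset (Pt × Pt)) (e f : Pt × Pt)
    (hflip : PFlip D.pts T T' e f)
    (heUL : D.IsUL e) :
    D.IsUL f ∧
    ∀ g ∈ T, g ≠ e → D.IsUL g →
      (posOf φ ψ c e < posOf φ ψ c g ↔ posOf φ ψ c f < posOf φ ψ c g) := by
  obtain ⟨hT, hT', heT, hfNew, hT'def⟩ := hflip
  obtain ⟨hTsp, hTnc, hTmax⟩ := hT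
  obtain ⟨hT'sp, hT'nc, _⟩ := hT'
  obtain ⟨hsepU, hsepL⟩ := hsep
  obtain ⟨a, b, hseg_e⟩ := heUL
  have heSp := hTsp e heT
  have hseg_e' : segment ℝ e.1 e.2 = segment ℝ (D.u a) (D.l b) := hseg_e
  obtain ⟨heop, hecross⟩ := normSeg hseg_e' heSp.2.2
  -- f is in T'
  have hfT' : f ∈ T' := by rw [hT'def]; exact Finset.mem_insert_self f _
  have hfSp : SpannedBy D.pts f := hT'sp f hfT'
  -- f crosses e
  have hcfe : Crosses f e := by
    obtain ⟨e', he'T, hce'⟩ := hTmax f hfSp hfNew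
    rcases eq_or_ne e' e with rfl | hne
    · exact hce'
    · exfalso
      have he'T' : e' ∈ T' := by
        rw [hT'def]; exact Finset.mem_insert_of_mem (Finset.mem_erase.mpr ⟨hne, he'T⟩)
      exact hT'nc f hfT' e' he'T' (hfNew e' he'T) hce'
  obtain ⟨z, hzf, hze⟩ := hcfe
  have hzef : z ∈ openSegment ℝ (D.u a) (D.l b) := heop ▸ hze
  -- membership helpers
  have hmem : ∀ x ∈ D.pts, (∃ i, D.u i = x) ∨ (∃ j, D.l j = x) := by
    intro x hx
    simp only [DoubleChain.pts, Finset.mem_union, Finset.mem_image, Finset.mem_univ,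
      true_and] at hx
    exact hx
  have hUhull : ∀ i, D.u i ∈ convexHull ℝ (Set.range D.u) :=
    fun i => subset_convexHull ℝ _ ⟨i, rfl⟩
  have hLhull : ∀ j, D.l j ∈ convexHull ℝ (Set.range D.l) :=
    fun j => subset_convexHull ℝ _ ⟨j, rfl⟩
  have hseesU : ∀ i j, ∀ w ∈ openSegment ℝ (D.u i) (D.l j),
      w ∉ convexHull ℝ (Set.range D.u) := by
    intro i j w hw hwU
    have h0 : w ∈ (∅ : Set Pt) := D.sees i j ▸ Set.mem_inter hw (Or.inl hwU)
    exact h0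
  have hseesL : ∀ i j, ∀ w ∈ openSegment ℝ (D.u i) (D.l j),
      w ∉ convexHull ℝ (Set.range D.l) := by
    intro i j w hw hwL
    have h0 : w ∈ (∅ : Set Pt) := D.sees i j ▸ Set.mem_inter hw (Or.inr hwL)
    exact h0
  -- classify f
  obtain ⟨i, j, hfij⟩ : ∃ i j, (f.1 = D.u i ∧ f.2 = D.l j) ∨ (f.1 = D.l j ∧ f.2 = D.u i) := by
    rcases hmem f.1 hfSp.1 with ⟨i, hi⟩ | ⟨j, hj⟩ <;>
      rcases hmem f.2 hfSp.2.1 with ⟨i', hi'⟩ | ⟨j', hj'⟩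
    · exfalso
      have h1 : segment ℝ f.1 f.2 ⊆ convexHull ℝ (Set.range D.u) :=
        (convex_convexHull ℝ _).segment_subset (by rw [← hi]; exact hUhull i)
          (by rw [← hi']; exact hUhull i')
      exact hseesU a b z hzef (h1 (openSegment_subset_segment ℝ _ _ hzf))
    · exact ⟨i, j', Or.inl ⟨hi.symm, hj'.symm⟩⟩
    · exact ⟨i', j, Or.inr ⟨hj.symm, hi'.symm⟩⟩
    · exfalso
      have h1 : segment ℝ f.1 f.2 ⊆ convexHull ℝ (Set.range D.l) :=
        (convex_convexHull ℝ _).segment_subset (by rw [← hj]; exact hLhull j)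
          (by rw [← hj']; exact hLhull j')
      exact hseesL a b z hzef (h1 (openSegment_subset_segment ℝ _ _ hzf))
  have hseg_f : segment ℝ f.1 f.2 = segment ℝ (D.u i) (D.l j) := by
    rcases hfij with ⟨h1, h2⟩ | ⟨h1, h2⟩
    · rw [h1, h2]
    · rw [h1, h2]; exact segment_symm ℝ _ _
  have hfUL : D.IsUL f := ⟨i, j, hseg_f⟩
  obtain ⟨hfop, hfcross⟩ := normSeg hseg_f hfSp.2.2
  refine ⟨hfUL, ?_⟩
  intro g hgT hgne hgUL
  obtain ⟨k, m, hgseg⟩ := hgUL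
  have hgSp := hTsp g hgT
  have hgseg' : segment ℝ g.1 g.2 = segment ℝ (D.u k) (D.l m) := hgseg
  obtain ⟨hgop, hgcross⟩ := normSeg hgseg' hgSp.2.2
  have hgT' : g ∈ T' := by
    rw [hT'def]; exact Finset.mem_insert_of_mem (Finset.mem_erase.mpr ⟨hgne, hgT⟩)
  have hncfg : ¬ Crosses f g := hT'nc f hfT' g hgT' (hfNew g hgT)
  have hnSSge : ¬ SameSeg g e := by
    intro hss
    obtain ⟨hop, _⟩ := normSeg (hss : segment ℝ g.1 g.2 = segment ℝ e.1 e.2) hgSp.2.2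
    refine hncfg ⟨z, hzf, ?_⟩
    rw [hop]; exact hze
  have hncge : ¬ Crosses g e := hTnc g hgT e heT hnSSge
  have hdis_ge : ∀ w ∈ openSegment ℝ (D.u k) (D.l m), w ∉ openSegment ℝ (D.u a) (D.l b) := by
    intro w hw hw'
    refine hncge ⟨w, ?_, ?_⟩
    · rw [hgop]; exact hw
    · rw [heop]; exact hw'
  have hdis_gf : ∀ w ∈ openSegment ℝ (D.u k) (D.l m), w ∉ openSegment ℝ (D.u i) (D.l j) := by
    intro w hw hw'
    refine hncfg ⟨w, ?_, ?_⟩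
    · rw [hfop]; exact hw'
    · rw [hgop]; exact hw
  -- pos equalities
  have hpose : posOf φ ψ c e = ψ (crossPt φ c (D.u a) (D.l b)) := congrArg ψ (hecross φ c)
  have hposf : posOf φ ψ c f = ψ (crossPt φ c (D.u i) (D.l j)) := congrArg ψ (hfcross φ c)
  have hposg : posOf φ ψ c g = ψ (crossPt φ c (D.u k) (D.l m)) := congrArg ψ (hgcross φ c)
  have hpge : posOf φ ψ c g ≠ posOf φ ψ c e := by
    intro hpp
    have hphi1 : φ (crossPt φ c (D.u k) (D.l m)) = c :=
      crossPt_phi φ c (ne_of_gt ((hsepL m).trans (hsepU k)))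
    have hphi2 : φ (crossPt φ c (D.u a) (D.l b)) = c :=
      crossPt_phi φ c (ne_of_gt ((hsepL b).trans (hsepU a)))
    have heq : crossPt φ c (D.u k) (D.l m) = crossPt φ c (D.u a) (D.l b) :=
      hψ _ _ (by rw [hphi1, hphi2]) ((hposg.symm.trans hpp).trans hpose)
    refine hncge ⟨crossPt φ c (D.u k) (D.l m), ?_, ?_⟩
    · rw [hgop]; exact crossPt_mem φ c (hsepU k) (hsepL m)
    · rw [heop, heq]; exact crossPt_mem φ c (hsepU a) (hsepL b)
  have hpgf : posOf φ ψ c f ≠ posOf φ ψ c g := by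
    intro hpp
    have hphi1 : φ (crossPt φ c (D.u i) (D.l j)) = c :=
      crossPt_phi φ c (ne_of_gt ((hsepL j).trans (hsepU i)))
    have hphi2 : φ (crossPt φ c (D.u k) (D.l m)) = c :=
      crossPt_phi φ c (ne_of_gt ((hsepL m).trans (hsepU k)))
    have heq : crossPt φ c (D.u i) (D.l j) = crossPt φ c (D.u k) (D.l m) :=
      hψ _ _ (by rw [hphi1, hphi2]) ((hposf.symm.trans hpp).trans hposg)
    refine hncfg ⟨crossPt φ c (D.u i) (D.l j), ?_, ?_⟩
    · rw [hfop]; exact crossPt_mem φ c (hsepU i) (hsepL j)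
    · rw [hgop, heq]; exact crossPt_mem φ c (hsepU k) (hsepL m)
  -- not strictly between
  have hnbet : ¬ ((posOf φ ψ c e < posOf φ ψ c g ∧ posOf φ ψ c g < posOf φ ψ c f) ∨
      (posOf φ ψ c f < posOf φ ψ c g ∧ posOf φ ψ c g < posOf φ ψ c e)) := by
    intro hb
    rw [hpose, hposf, hposg] at hb
    have hzf' : z ∈ openSegment ℝ (D.u i) (D.l j) := hfop ▸ hzf
    rcases lt_trichotomy (φ z) c with hc | hc | hc
    · -- z below the line : apply the flipped core lemma
      have e1 : crossPt (-φ) (-c) (D.l b) (D.u a) = crossPt φ c (D.u a) (D.l b) := by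
        rw [crossPt_neg]; exact crossPt_symm φ c _ _
      have e2 : crossPt (-φ) (-c) (D.l j) (D.u i) = crossPt φ c (D.u i) (D.l j) := by
        rw [crossPt_neg]; exact crossPt_symm φ c _ _
      have e3 : crossPt (-φ) (-c) (D.l m) (D.u k) = crossPt φ c (D.u k) (D.l m) := by
        rw [crossPt_neg]; exact crossPt_symm φ c _ _
      refine core_lemma (-φ) ψ (-c) ?_ (convexHull ℝ (Set.range D.l)) (convex_convexHull ℝ _)
        (D.l b) (D.u a) (D.l j) (D.u i) (D.l m) (D.u k) z
        (hLhull b) (hLhull j) (hLhull m)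
        (by simp only [LinearMap.neg_apply]; linarith [hsepL b])
        (by simp only [LinearMap.neg_apply]; linarith [hsepL j])
        (by simp only [LinearMap.neg_apply]; linarith [hsepL m])
        (by simp only [LinearMap.neg_apply]; linarith [hsepU a])
        (by simp only [LinearMap.neg_apply]; linarith [hsepU i])
        (by simp only [LinearMap.neg_apply]; linarith [hsepU k])
        ?_ ?_ ?_ ?_ ?_ ?_
        (by simp only [LinearMap.neg_apply]; linarith)
        (by rw [e1, e2, e3]; exact hb)
      · intro x y h1 h2
        refine hψ x y ?_ h2
        simpa using neg_inj.mp (by simpa using h1)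
      · intro w hw
        rw [openSegment_symm] at hw
        exact hseesL a b w hw
      · intro w hw
        rw [openSegment_symm] at hw
        exact hseesL i j w hw
      · intro w hw hw'
        rw [openSegment_symm] at hw hw'
        exact hdis_ge w hw hw'
      · intro w hw hw'
        rw [openSegment_symm] at hw hw'
        exact hdis_gf w hw hw'
      · rw [openSegment_symm]; exact hzef
      · rw [openSegment_symm]; exact hzf'
    · -- z on the line : pos e = pos f
      have hz1 : z = crossPt φ c (D.u a) (D.l b) :=
        crossPt_uniq φ c (hsepU a) (hsepL b) hzef hc
      have hz2 : z = crossPt φ c (D.u i) (D.l j) :=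
        crossPt_uniq φ c (hsepU i) (hsepL j) hzf' hc
      have : ψ (crossPt φ c (D.u a) (D.l b)) = ψ (crossPt φ c (D.u i) (D.l j)) := by
        rw [← hz1, ← hz2]
      rcases hb with ⟨h1, h2⟩ | ⟨h1, h2⟩ <;> linarith
    · exact core_lemma φ ψ c hψ (convexHull ℝ (Set.range D.u)) (convex_convexHull ℝ _)
        (D.u a) (D.l b) (D.u i) (D.l j) (D.u k) (D.l m) z
        (hUhull a) (hUhull i) (hUhull k)
        (hsepU a) (hsepU i) (hsepU k) (hsepL b) (hsepL j) (hsepL m)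
        (hseesU a b) (hseesU i j) hdis_ge hdis_gf hzef hzf' hc hb
  constructor
  · intro h
    rcases lt_trichotomy (posOf φ ψ c f) (posOf φ ψ c g) with h' | h' | h'
    · exact h'
    · exact absurd h' hpgf
    · exact absurd (Or.inl ⟨h, h'⟩) hnbet
  · intro h
    rcases lt_trichotomy (posOf φ ψ c e) (posOf φ ψ c g) with h' | h' | h'
    · exact h'
    · exact absurd h'.symm hpge
    · exact absurd (Or.inr ⟨h, h'⟩) hnbet
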